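/- arXiv:2308.04521 — 4 statements merged into one kernel-verified Lean document; each statement's English description precedes it below -/
import Mathlib

section
/- Let F be a Σ-frame with binary relations R_i, R_j, R_k satisfying: for all u, v, w, w', if Ruvw and w R_k w' then there exist x, y with Rxyw', u R_i x and v R_j y. Then for all upward-closed A, B one has [R_i]A · [R_j]B ⊆ [R_k](A · B). -/
def kprod {W : Type*} (R : W → W → W → Prop) (A B : Set W) : Set W :=
  {w | ∃ u v, R u v w ∧ u ∈ A ∧ v ∈ B}

def kbox {W : Type*} (Ri : W → W → Prop) (A : Set W) : Set W :=
  {u | ∀ w, Ri u w → w ∈ A}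

/-- Promotion is sound on Σ-frames. -/
theorem stmt7 {W : Type*} [PartialOrder W] (R : W → W → W → Prop)
    (Ri Rj Rk : W → W → Prop)
    (hprom : ∀ u v w w', R u v w → Rk w w' →
      ∃ x y, R x y w' ∧ Ri u x ∧ Rj v y)
    (A B : Set W) (hA : IsUpperSet A) (hB : IsUpperSet B) :
    kprod R (kbox Ri A) (kbox Rj B) ⊆ kbox Rk (kprod R A B) := by
  rintro w ⟨u, v, hR, hu, hv⟩ w' hk
  obtain ⟨x, y, hR', hix, hjy⟩ := hprom u v w w' hR hk
  exact ⟨x, y, hR', hu x hix, hv y hjy⟩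
end

section
/- Let A be a Σ-algebra and A^σ the canonical extension of its lattice reduct, with !_i^σ x = ⋀{ !_i a | x ≤ a ∈ A } on filter elements and !_i^σ u = ⋁{ !_i^σ x | u ≥ x filter element } in general, and with ·^σ defined analogously. If k ⪯ i, j in Σ, then for all filter elements x, y of A^σ: !_i^σ x ·^σ !_j^σ y ≤ !_k^σ(x ·^σ y). -/
/-- Filter elements of a canonical extension: meets of elements of `A`. -/
def IsFiltElt {A Aσ : Type*} [CompleteLattice Aσ] (e : A → Aσ) (x : Aσ) : Prop :=
  ∃ S : Set A, x = sInf (e '' S)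

/-- The product `·^σ` on filter elements. -/
def prodF {A Aσ : Type*} [Mul A] [CompleteLattice Aσ] (e : A → Aσ) (x y : Aσ) : Aσ :=
  sInf {z | ∃ a b : A, x ≤ e a ∧ y ≤ e b ∧ z = e (a * b)}

/-- The extension `!^σ` of a modality on filter elements. -/
def bangF {A Aσ : Type*} [CompleteLattice Aσ] (e : A → Aσ) (bang : A → A) (x : Aσ) : Aσ :=
  sInf {z | ∃ a : A, x ≤ e a ∧ z = e (bang a)}

/-- Promotion holds in the canonical extension on filter elements. -/
theorem stmt11 {A Aσ ι : Type*} [Lattice A] [BoundedOrder A] [Mul A] [CompleteLattice Aσ]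
    (e : A → Aσ)
    -- `e` is a dense compact lattice embedding
    (he : ∀ a b : A, e a ≤ e b ↔ a ≤ b)
    (hemeet : ∀ a b : A, e (a ⊓ b) = e a ⊓ e b)
    (hejoin : ∀ a b : A, e (a ⊔ b) = e a ⊔ e b)
    (hdense : ∀ x : Aσ, x = sSup {y | IsFiltElt e y ∧ y ≤ x})
    (hcompact : ∀ S T : Set A, sInf (e '' S) ≤ sSup (e '' T) →
      ∃ S' T' : Finset A, ↑S' ⊆ S ∧ ↑T' ⊆ T ∧ S'.inf id ≤ T'.sup id)
    -- Σ-algebra data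
    (bang : ι → A → A) (prec : ι → ι → Prop) (i j k : ι)
    (hki : prec k i) (hkj : prec k j)
    (hmulmono : ∀ a b c d : A, a ≤ b → c ≤ d → a * c ≤ b * d)
    (hbangmeet : ∀ (l : ι) (a b : A), bang l (a ⊓ b) = bang l a ⊓ bang l b)
    (hprom : ∀ a b : A, bang i a * bang j b ≤ bang k (a * b))
    -- filter elements
    (x y : Aσ) (hx : IsFiltElt e x) (hy : IsFiltElt e y) :
    prodF e (bangF e (bang i) x) (bangF e (bang j) y) ≤ bangF e (bang k) (prodF e x y) := by
  classical
  apply le_sInf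
  rintro z ⟨c, hc, rfl⟩
  -- bang is monotone
  have hbmono : ∀ (l : ι) (u v : A), u ≤ v → bang l u ≤ bang l v := by
    intro l u v huv
    have h1 : bang l (u ⊓ v) = bang l u := by rw [inf_eq_left.2 huv]
    rw [← h1, hbangmeet]; exact inf_le_right
  -- the defining set of prodF x y as an image
  set S : Set A := {p : A | ∃ a b : A, x ≤ e a ∧ y ≤ e b ∧ p = a * b} with hSdef
  have hprod : prodF e x y = sInf (e '' S) := by
    unfold prodF
    congr 1
    ext w
    constructor
    · rintro ⟨a, b, ha, hb, rfl⟩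
      exact ⟨a * b, ⟨a, b, ha, hb, rfl⟩, rfl⟩
    · rintro ⟨p, ⟨a, b, ha, hb, rfl⟩, rfl⟩
      exact ⟨a, b, ha, hb, rfl⟩
  have hSne : S.Nonempty := by
    by_contra hne
    rw [Set.not_nonempty_iff_eq_empty] at hne
    have htop : (⊤ : Aσ) ≤ e c := by
      have := hc
      rw [hprod, hne] at this
      simpa using this
    have : c * c ∈ S := ⟨c, c, le_trans le_top htop, le_trans le_top htop, rfl⟩
    rw [hne] at this
    exact this
  have hcompat : sInf (e '' S) ≤ sSup (e '' {c}) := by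
    rw [Set.image_singleton, csSup_singleton]
    rw [← hprod]; exact hc
  obtain ⟨S', T', hS', hT', hle⟩ := hcompact S {c} hcompat
  have hTc : T'.sup id ≤ c := by
    apply Finset.sup_le
    intro t ht
    have : t ∈ ({c} : Set A) := hT' ht
    simp only [Set.mem_singleton_iff] at this
    exact le_of_eq this
  obtain ⟨s₀, hs₀⟩ := hSne
  have key : ∀ F : Finset A, ↑F ⊆ S → F.Nonempty →
      ∃ a b : A, x ≤ e a ∧ y ≤ e b ∧ a * b ≤ F.inf id := by
    intro F
    induction F using Finset.induction_on with
    | empty => intro _ h; exact absurd h (by simp)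
    | @insert t F htF ih =>
      intro hsub _
      have htS : t ∈ S := hsub (by simp)
      obtain ⟨at', bt, hat, hbt, hteq⟩ := htS
      rcases F.eq_empty_or_nonempty with hFe | hFne
      · subst hFe
        refine ⟨at', bt, hat, hbt, ?_⟩
        simp only [Finset.inf_insert, Finset.inf_empty, id, ← hteq, le_inf_iff]
        exact ⟨le_refl _, le_top⟩
      · obtain ⟨a', b', ha', hb', hab'⟩ := ih (fun u hu => hsub (by simp [hu])) hFne
        refine ⟨at' ⊓ a', bt ⊓ b', ?_, ?_, ?_⟩
        · rw [hemeet]; exact le_inf hat ha'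
        · rw [hemeet]; exact le_inf hbt hb'
        · rw [Finset.inf_insert]
          refine le_inf ?_ ?_
          · calc (at' ⊓ a') * (bt ⊓ b') ≤ at' * bt :=
                  hmulmono _ _ _ _ inf_le_left inf_le_left
              _ = id t := by rw [hteq]; rfl
          · exact le_trans (hmulmono _ _ _ _ inf_le_right inf_le_right) hab'
  obtain ⟨a, b, hxa, hyb, hab⟩ := key (insert s₀ S')
    (by intro u hu; rcases Finset.mem_insert.1 hu with h | h
        · exact h ▸ hs₀
        · exact hS' h)
    ⟨s₀, Finset.mem_insert_self _ _⟩
  have habc : a * b ≤ c := by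
    refine le_trans hab (le_trans ?_ (le_trans hle hTc))
    rw [Finset.inf_insert]; exact inf_le_right
  have h1 : bangF e (bang i) x ≤ e (bang i a) := sInf_le ⟨a, hxa, rfl⟩
  have h2 : bangF e (bang j) y ≤ e (bang j b) := sInf_le ⟨b, hyb, rfl⟩
  have h3 : prodF e (bangF e (bang i) x) (bangF e (bang j) y) ≤ e (bang i a * bang j b) :=
    sInf_le ⟨bang i a, bang j b, h1, h2, rfl⟩
  exact le_trans h3 ((he _ _).2 (le_trans (hprom a b) (hbmono k _ _ habc)))
end

section
/- Let A be a Σ-algebra with i ∈ C, so that !_i a · b ≤ !_i a · b · !_i a for all a, b ∈ A. Then in the canonical extension A^σ, for all filter elements x, y: !_i^σ x ·^σ y ≤ !_i^σ x ·^σ y ·^σ !_i^σ x. -/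
/-- In a down-directed nonempty set, some element lies below any finite subset's inf. -/
lemma directed_finset_inf {A : Type*} [Lattice A] [BoundedOrder A] {S : Set A}
    (hS : S.Nonempty) (hdir : ∀ s ∈ S, ∀ t ∈ S, ∃ u ∈ S, u ≤ s ∧ u ≤ t) :
    ∀ F : Finset A, ↑F ⊆ S → ∃ s ∈ S, s ≤ F.inf id := by
  classical
  intro F
  induction F using Finset.induction_on with
  | empty =>
    intro _
    obtain ⟨s, hs⟩ := hS
    exact ⟨s, hs, by simp⟩
  | @insert a F ha ih =>
    intro hins
    obtain ⟨s, hsS, hsF⟩ := ih (fun t ht => hins (Finset.mem_insert_of_mem ht))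
    have haS : a ∈ S := hins (Finset.mem_insert_self a F)
    obtain ⟨u, huS, hua, hus⟩ := hdir a haS s hsS
    refine ⟨u, huS, ?_⟩
    rw [Finset.inf_insert]
    exact le_inf hua (hus.trans hsF)

/-- Non-local contraction lifts to filter elements of the canonical extension. -/
theorem stmt13 {A Aσ ι : Type*} [Lattice A] [BoundedOrder A] [Mul A] [CompleteLattice Aσ]
    (e : A → Aσ)
    (he : ∀ a b : A, e a ≤ e b ↔ a ≤ b)
    (hemeet : ∀ a b : A, e (a ⊓ b) = e a ⊓ e b)
    (hcompact : ∀ S T : Set A, sInf (e '' S) ≤ sSup (e '' T) →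
      ∃ S' T' : Finset A, ↑S' ⊆ S ∧ ↑T' ⊆ T ∧ S'.inf id ≤ T'.sup id)
    (bang : ι → A → A) (i : ι)
    (hmulmono : ∀ a b c d : A, a ≤ b → c ≤ d → a * c ≤ b * d)
    (hbangmeet : ∀ (l : ι) (a b : A), bang l (a ⊓ b) = bang l a ⊓ bang l b)
    -- `i ∈ C`: non-local contraction holds in `A`
    (hcontr : ∀ a b : A, bang i a * b ≤ bang i a * b * bang i a)
    (x y : Aσ) (hx : IsFiltElt e x) (hy : IsFiltElt e y) :
    prodF e (bangF e (bang i) x) y ≤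
      prodF e (prodF e (bangF e (bang i) x) y) (bangF e (bang i) x) := by
  classical
  apply le_sInf
  rintro z ⟨c, d, hc, hd, rfl⟩
  -- There is some a with x ≤ e a (else bangF x = ⊤ and hd : ⊤ ≤ e d gives one).
  have hUx : ∃ a : A, x ≤ e a := by
    by_contra h
    push_neg at h
    have hb : bangF e (bang i) x = ⊤ := by
      unfold bangF
      have hempty : {z | ∃ a : A, x ≤ e a ∧ z = e (bang i a)} = (∅ : Set Aσ) := by
        ext z
        simp only [Set.mem_setOf_eq, Set.mem_empty_iff_false, iff_false, not_exists]
        rintro a ⟨hxa, _⟩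
        exact (h a) hxa
      rw [hempty, sInf_empty]
    rw [hb] at hd
    exact (h d) (le_top.trans hd)
  obtain ⟨a₀, ha₀⟩ := hUx
  -- bangF x ≤ e (bang i a') whenever x ≤ e a'
  have hbang_le : ∀ a' : A, x ≤ e a' → bangF e (bang i) x ≤ e (bang i a') := by
    intro a' ha'
    exact sInf_le ⟨a', ha', rfl⟩
  -- There is some b with y ≤ e b (else prodF (bangF x) y = ⊤ and hc gives one).
  have hUy : ∃ b : A, y ≤ e b := by
    by_contra h
    push_neg at h
    have hp : prodF e (bangF e (bang i) x) y = ⊤ := by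
      unfold prodF
      have hempty :
          {z | ∃ a b : A, bangF e (bang i) x ≤ e a ∧ y ≤ e b ∧ z = e (a * b)}
            = (∅ : Set Aσ) := by
        ext z
        simp only [Set.mem_setOf_eq, Set.mem_empty_iff_false, iff_false, not_exists]
        rintro a b ⟨_, hyb, _⟩
        exact (h b) hyb
      rw [hempty, sInf_empty]
    rw [hp] at hc
    exact (h c) (le_top.trans hc)
  obtain ⟨b₀, hb₀⟩ := hUy
  -- The set S₁ whose image-inf is prodF (bangF x) y
  set S₁ : Set A :=
    {s | ∃ a b : A, bangF e (bang i) x ≤ e a ∧ y ≤ e b ∧ s = a * b} with hS₁def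
  have himg : prodF e (bangF e (bang i) x) y = sInf (e '' S₁) := by
    unfold prodF
    congr 1
    ext z
    constructor
    · rintro ⟨a, b, h1, h2, rfl⟩
      exact ⟨a * b, ⟨a, b, h1, h2, rfl⟩, rfl⟩
    · rintro ⟨s, ⟨a, b, h1, h2, rfl⟩, rfl⟩
      exact ⟨a, b, h1, h2, rfl⟩
  have hS₁ne : S₁.Nonempty :=
    ⟨bang i a₀ * b₀, bang i a₀, b₀, hbang_le a₀ ha₀, hb₀, rfl⟩
  have hS₁dir : ∀ s ∈ S₁, ∀ t ∈ S₁, ∃ u ∈ S₁, u ≤ s ∧ u ≤ t := by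
    rintro s ⟨a₁, b₁, h1, h2, rfl⟩ t ⟨a₂, b₂, h3, h4, rfl⟩
    refine ⟨(a₁ ⊓ a₂) * (b₁ ⊓ b₂), ⟨a₁ ⊓ a₂, b₁ ⊓ b₂, ?_, ?_, rfl⟩, ?_, ?_⟩
    · rw [hemeet]; exact le_inf h1 h3
    · rw [hemeet]; exact le_inf h2 h4
    · exact hmulmono _ _ _ _ inf_le_left inf_le_left
    · exact hmulmono _ _ _ _ inf_le_right inf_le_right
  -- Compactness: get a*b ∈ S₁ with a*b ≤ c
  have hcle : sInf (e '' S₁) ≤ sSup (e '' {c}) := by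
    rw [← himg, Set.image_singleton, csSup_singleton]
    exact hc
  obtain ⟨S', T', hS'sub, hT'sub, hle⟩ := hcompact S₁ {c} hcle
  have hT'le : T'.sup id ≤ c := by
    apply Finset.sup_le
    intro t ht
    have : t ∈ ({c} : Set A) := hT'sub ht
    simp only [Set.mem_singleton_iff] at this
    simp [this]
  obtain ⟨s, hsS₁, hsle⟩ := directed_finset_inf hS₁ne hS₁dir S' hS'sub
  obtain ⟨a, b, haU, hbV, rfl⟩ := hsS₁
  have habc : a * b ≤ c := hsle.trans (hle.trans hT'le)
  -- The set F whose image-inf is bangF x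
  set F : Set A := {s | ∃ a' : A, x ≤ e a' ∧ s = bang i a'} with hFdef
  have hFimg : bangF e (bang i) x = sInf (e '' F) := by
    unfold bangF
    congr 1
    ext z
    constructor
    · rintro ⟨a', h1, rfl⟩
      exact ⟨bang i a', ⟨a', h1, rfl⟩, rfl⟩
    · rintro ⟨s, ⟨a', h1, rfl⟩, rfl⟩
      exact ⟨a', h1, rfl⟩
  have hFne : F.Nonempty := ⟨bang i a₀, a₀, ha₀, rfl⟩
  have hFdir : ∀ s ∈ F, ∀ t ∈ F, ∃ u ∈ F, u ≤ s ∧ u ≤ t := by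
    rintro s ⟨a₁, h1, rfl⟩ t ⟨a₂, h2, rfl⟩
    refine ⟨bang i (a₁ ⊓ a₂), ⟨a₁ ⊓ a₂, ?_, rfl⟩, ?_, ?_⟩
    · rw [hemeet]; exact le_inf h1 h2
    · rw [hbangmeet]; exact inf_le_left
    · rw [hbangmeet]; exact inf_le_right
  have hdle : sInf (e '' F) ≤ sSup (e '' {a ⊓ d}) := by
    rw [← hFimg, Set.image_singleton, csSup_singleton, hemeet]
    exact le_inf haU hd
  obtain ⟨F', T'', hF'sub, hT''sub, hle2⟩ := hcompact F {a ⊓ d} hdle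
  have hT''le : T''.sup id ≤ a ⊓ d := by
    apply Finset.sup_le
    intro t ht
    have : t ∈ ({a ⊓ d} : Set A) := hT''sub ht
    simp only [Set.mem_singleton_iff] at this
    simp [this]
  obtain ⟨t, htF, htle⟩ := directed_finset_inf hFne hFdir F' hF'sub
  obtain ⟨a₁, ha₁, rfl⟩ := htF
  have htad : bang i a₁ ≤ a ⊓ d := htle.trans (hle2.trans hT''le)
  -- Conclude: bang i a₁ * b ≤ c * d via contraction
  have hfinal : bang i a₁ * b ≤ c * d := by
    calc bang i a₁ * b ≤ bang i a₁ * b * bang i a₁ := hcontr a₁ b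
    _ ≤ c * d :=
      hmulmono _ _ _ _
        ((hmulmono _ _ _ _ (htad.trans inf_le_left) le_rfl).trans habc)
        (htad.trans inf_le_right)
  calc prodF e (bangF e (bang i) x) y
      ≤ e (bang i a₁ * b) := sInf_le ⟨bang i a₁, b, hbang_le a₁ ha₁, hbV, rfl⟩
    _ ≤ e (c * d) := (he _ _).mpr hfinal
end

section
/- Every completely distributive complete lattice L that is join-generated by its completely join-irreducible elements is isomorphic to the lattice of upward-closed subsets of the poset (J∞(L), ≤_δ) (Raney representation), via a ↦ { b ∈ J∞(L) | a ≤_δ b } where ≤_δ is the order dual to the restriction of the lattice order. -/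
/-- `a` is completely join-irreducible. -/
def CJI {L : Type*} [CompleteLattice L] (a : L) : Prop :=
  ∀ S : Set L, a = sSup S → a ∈ S

lemma cji_prime {L : Type*} [CompletelyDistribLattice L] {j : L} (hj : CJI j)
    {T : Set L} (h : j ≤ sSup T) : ∃ t ∈ T, j ≤ t := by
  have hkey : j = sSup ((fun t => j ⊓ t) '' T) := by
    have : j ⊓ sSup T = sSup ((fun t => j ⊓ t) '' T) := by
      rw [sSup_image, inf_sSup_eq]
    rw [← this, inf_eq_left.mpr h]
  obtain ⟨t, ht, heq⟩ := hj _ hkey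
  exact ⟨t, ht, by rw [← heq]; exact inf_le_right⟩

/-- Raney representation: a completely distributive complete lattice join-generated by
its completely join-irreducible elements is isomorphic to the lattice of
`≤_δ`-upward-closed subsets of `(J∞(L), ≤_δ)` via `a ↦ {b ∈ J∞(L) | a ≤_δ b}`. -/
theorem stmt17 {L : Type*} [CompletelyDistribLattice L]
    (hjoin : ∀ a : L, a = sSup {j | CJI j ∧ j ≤ a}) :
    Function.Injective (fun a : L => {b : {j : L // CJI j} | (b : L) ≤ a}) ∧
    (∀ S : Set {j : L // CJI j},
      (∀ b c : {j : L // CJI j}, b ∈ S → (c : L) ≤ (b : L) → c ∈ S) →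
      ∃ a : L, {b : {j : L // CJI j} | (b : L) ≤ a} = S) ∧
    (∀ a b : L, a ≤ b ↔
      {c : {j : L // CJI j} | (c : L) ≤ a} ⊆ {c : {j : L // CJI j} | (c : L) ≤ b}) := by
  have hle : ∀ a b : L,
      {c : {j : L // CJI j} | (c : L) ≤ a} ⊆ {c : {j : L // CJI j} | (c : L) ≤ b} → a ≤ b := by
    intro a b hsub
    calc a = sSup {j | CJI j ∧ j ≤ a} := hjoin a
      _ ≤ b := by
        apply sSup_le
        rintro j ⟨hj, hja⟩
        exact hsub (show ((⟨j, hj⟩ : {j : L // CJI j}) : L) ≤ a from hja)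
  refine ⟨?_, ?_, ?_⟩
  · intro a b hab
    simp only at hab
    exact le_antisymm (hle a b hab.le) (hle b a hab.ge)
  · intro S hS
    refine ⟨sSup ((fun x : {j : L // CJI j} => (x : L)) '' S), ?_⟩
    ext b
    simp only [Set.mem_setOf_eq]
    constructor
    · intro hb
      obtain ⟨t, ht, hbt⟩ := cji_prime b.2 hb
      obtain ⟨c, hcS, rfl⟩ := ht
      exact hS c b hcS hbt
    · intro hb
      exact le_sSup ⟨b, hb, rfl⟩
  · intro a b
    exact ⟨fun h c hc => le_trans hc h, hle a b⟩
end
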